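/- Let E be a Banach space with the Opial property and X ⊆ E nonempty and weakly compact. Then X has the unique minimizer property: every metric functional h ∈ X^◇ has a point a ∈ X such that h(a) < h(x) for all x ∈ X with x ≠ a. -/

import Mathlib

open Filter Topology

section AuxLemmas


/-- Dependent choice along list prefixes. -/
private lemma aux_dc {α : Type*} (P : List α → α → Prop) (hP : ∀ l, ∃ y, P l y) :
    ∃ v : ℕ → α, ∀ n, P (List.ofFn fun i : Fin n => v i) (v n) := by
  choose f hf using hP
  let hist : ℕ → List α := fun n => Nat.rec [] (fun _ l => l.concat (f l)) n
  have key : ∀ n, hist n = List.ofFn fun i : Fin n => f (hist i) := by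
    intro n
    induction n with
    | zero => rfl
    | succ n ih =>
      show (hist n).concat (f (hist n)) = _
      rw [List.ofFn_succ']
      simp only [Fin.coe_castSucc, Fin.val_last]
      rw [ih]
  refine ⟨fun n => f (hist n), fun n => ?_⟩
  show P (List.ofFn fun i : Fin n => f (hist i)) (f (hist n))
  rw [(key n).symm]
  exact hf (hist n)

private lemma aux_tendsto_of_cluster_unique {γ : Type*} [TopologicalSpace γ] {K : Set γ}
    (hK : IsCompact K) {s : ℕ → γ} (hs : ∀ n, s n ∈ K) {L : γ}
    (huniq : ∀ c ∈ K, MapClusterPt c atTop s → c = L) :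
    Tendsto s atTop (𝓝 L) := by
  by_contra hcon
  obtain ⟨t, ht, hpre⟩ : ∃ t ∈ 𝓝 L, ¬(s ⁻¹' t ∈ atTop) := by
    rw [tendsto_def] at hcon; push_neg at hcon; exact hcon
  obtain ⟨U, hUt, hUopen, hLU⟩ := mem_nhds_iff.1 ht
  have hfreq : ∃ᶠ n in atTop, s n ∈ Uᶜ := by
    have h1 : ¬ ∀ᶠ n in atTop, s n ∈ t := hpre
    have h2 : ∃ᶠ n in atTop, s n ∉ t := not_eventually.1 h1
    exact h2.mono fun n hn hmem => hn (hUt hmem)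
  have hne : (map s atTop ⊓ 𝓟 Uᶜ).NeBot := by
    rw [frequently_iff_neBot] at hfreq
    refine (hfreq.map s).mono (le_inf (map_mono inf_le_left) ?_)
    refine le_trans (map_mono inf_le_right) ?_
    rw [map_principal]
    exact principal_mono.2 (Set.image_preimage_subset s _)
  have hKU : IsCompact (K ∩ Uᶜ) := hK.inter_right hUopen.isClosed_compl
  have hle : map s atTop ⊓ 𝓟 Uᶜ ≤ 𝓟 (K ∩ Uᶜ) := by
    rw [← inf_principal]
    exact inf_le_inf (le_principal_iff.2 (mem_map.2 (univ_mem' fun n => hs n))) le_rfl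
  haveI := hne
  obtain ⟨c, hcKU, hcl⟩ := hKU.exists_clusterPt hle
  obtain ⟨hcK, hcU⟩ := hcKU
  have hmc : MapClusterPt c atTop s := hcl.mono inf_le_left
  rw [huniq c hcK hmc] at hcU
  exact hcU hLU

private lemma aux_cluster_eq {γ : Type*} [TopologicalSpace γ] [T2Space γ] {c l : γ} {g : ℕ → γ}
    (hc : MapClusterPt c atTop g) (hg : Tendsto g atTop (𝓝 l)) : c = l :=
  eq_of_nhds_neBot (hc.clusterPt.mono hg)

private lemma aux_rat_approx {E : Type*} [NormedAddCommGroup E] [NormedSpace ℝ E]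
    (m : ℕ) (G : Fin m → E) (c : Fin m → ℝ) {ε : ℝ} (hε : 0 < ε) :
    ∃ q : Fin m → ℚ, ‖(∑ i, c i • G i) - ∑ i, (q i : ℝ) • G i‖ < ε := by
  have hq : ∀ i : Fin m, ∃ q : ℚ, |c i - (q:ℝ)| < ε / (m + 1) / (‖G i‖ + 1) := by
    intro i
    exact exists_rat_near (c i) (by positivity)
  choose q hqs using hq
  refine ⟨q, ?_⟩
  rw [← Finset.sum_sub_distrib]
  have hterm : ∀ i : Fin m, ‖c i • G i - (q i : ℝ) • G i‖ ≤ ε / (m + 1) := by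
    intro i
    rw [← sub_smul, norm_smul, Real.norm_eq_abs]
    calc |c i - (q i:ℝ)| * ‖G i‖
        ≤ (ε / (m+1) / (‖G i‖ + 1)) * (‖G i‖ + 1) := by
          gcongr
          · exact le_of_lt (hqs i)
          · linarith [norm_nonneg (G i)]
    _ = ε / (m+1) := div_mul_cancel₀ _ (by positivity)
  calc ‖∑ i, (c i • G i - (q i : ℝ) • G i)‖
      ≤ ∑ i : Fin m, ε / (m+1) := by
        refine le_trans (norm_sum_le _ _) (Finset.sum_le_sum fun i _ => hterm i)
  _ = m * (ε / (m+1)) := by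
        rw [Finset.sum_const, Finset.card_univ, Fintype.card_fin, nsmul_eq_mul]
  _ < ε := by
        have hm1 : (0:ℝ) < (m:ℝ) + 1 := by positivity
        have hfrac : (m:ℝ)/((m:ℝ)+1) < 1 := (div_lt_one hm1).2 (by linarith)
        have key : (m:ℝ) * (ε/(m+1)) = ε * ((m:ℝ)/((m:ℝ)+1)) := by ring
        rw [key]
        calc ε * ((m:ℝ)/((m:ℝ)+1)) < ε * 1 := by
              exact mul_lt_mul_of_pos_left hfrac hε
        _ = ε := mul_one ε


end AuxLemmas

section Combos


variable {E : Type*} [NormedAddCommGroup E] [NormedSpace ℝ E]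

private lemma exists_nphi [CompleteSpace E] (z : E) : ∃ g : E →L[ℝ] ℝ, ‖g‖ ≤ 1 ∧ g z = ‖z‖ := by
  by_cases hz : z = 0
  · exact ⟨0, by simp, by simp [hz]⟩
  · obtain ⟨g, h1, h2⟩ := exists_dual_vector ℝ z (norm_ne_zero_iff.2 hz)
    exact ⟨g, le_of_eq h1, by exact_mod_cast h2⟩

private noncomputable def nphi [CompleteSpace E] (z : E) : E →L[ℝ] ℝ := (exists_nphi z).choose

private lemma nphi_norm [CompleteSpace E] (z : E) : ‖nphi z‖ ≤ 1 := (exists_nphi z).choose_spec.1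

private lemma nphi_apply_self [CompleteSpace E] (z : E) : nphi z z = ‖z‖ :=
  (exists_nphi z).choose_spec.2

private def GLst (a : E) (l : List E) (i : ℕ) : E := if i = 0 then a else l.getD (i - 1) a

private noncomputable def comboLst (a : E) (l : List E) (q : List ℚ) : E :=
  if q.length ≤ l.length + 1 then
    ∑ i ∈ Finset.range q.length, ((q.getD i 0 : ℚ) : ℝ) • GLst a l i
  else 0

private noncomputable def comboF (a : E) (v : ℕ → E) (q : List ℚ) : E :=
  ∑ i ∈ Finset.range q.length, ((q.getD i 0 : ℚ) : ℝ) • (if i = 0 then a else v (i - 1))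

private lemma comboLst_eq_comboF (a : E) (v : ℕ → E) (n : ℕ) (q : List ℚ)
    (hq : q.length ≤ n + 1) :
    comboLst a (List.ofFn fun i : Fin n => v i) q = comboF a v q := by
  unfold comboLst comboF GLst
  rw [if_pos (by simpa using hq)]
  refine Finset.sum_congr rfl fun i hi => ?_
  rcases Nat.eq_zero_or_pos i with h0 | hpos
  · simp [h0]
  · have h1 : i ≠ 0 := hpos.ne'
    rw [if_neg h1, if_neg h1]
    rw [Finset.mem_range] at hi
    have hlt : i - 1 < n := by omega
    rw [List.getD_eq_getElem _ a (n := i - 1) (by simpa using hlt)]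
    simp


end Combos

/-- In a Banach space with the Opial property, every nonempty weakly compact subset `X`
has the unique minimizer property: every metric functional on `X` (a pointwise limit of
functionals `x ↦ ‖x − w‖ − ‖w‖`, `w ∈ X`) has a unique minimizer which is a strict
minimizer. -/
theorem stmt_15 {E : Type*} [NormedAddCommGroup E] [NormedSpace ℝ E] [CompleteSpace E]
    (opial : ∀ (a : ℕ → E) (l : E),
      (∀ f : E →L[ℝ] ℝ, Tendsto (fun n => f (a n)) atTop (nhds (f l))) →
      ∀ x : E, x ≠ l →
        liminf (fun n => ‖a n - l‖) atTop < liminf (fun n => ‖a n - x‖) atTop)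
    (X : Set E) (hX : X.Nonempty) (hXwc : IsCompact (toWeakSpace ℝ E '' X))
    (h : X → ℝ)
    (hmem : h ∈ closure (Set.range fun w : X =>
      (fun x : X => ‖(x : E) - (w : E)‖ - ‖(w : E)‖))) :
    ∃ a : X, ∀ x : X, x ≠ a → h a < h x := by
  classical
  haveI : Nonempty X := hX.to_subtype
  -- continuity of evaluations on the weak space
  have hevalcont : ∀ φ : E →L[ℝ] ℝ,
      Continuous fun u : WeakSpace ℝ E => φ ((toWeakSpace ℝ E).symm u) :=
    fun φ => WeakBilin.eval_continuous _ φ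
  -- X is norm-bounded
  obtain ⟨M, hM⟩ : ∃ M : ℝ, ∀ w : X, ‖(w : E)‖ ≤ M := by
    have hb : ∀ φ : E →L[ℝ] ℝ, ∃ C, ∀ w : X,
        ‖NormedSpace.inclusionInDoubleDual ℝ E (w : E) φ‖ ≤ C := by
      intro φ
      have hcomp := hXwc.image (hevalcont φ)
      obtain ⟨r, hr⟩ := hcomp.isBounded.subset_closedBall 0
      refine ⟨r, fun w => ?_⟩
      have hw : φ ((toWeakSpace ℝ E).symm (toWeakSpace ℝ E (w : E)))
          ∈ (fun u : WeakSpace ℝ E => φ ((toWeakSpace ℝ E).symm u)) '' (toWeakSpace ℝ E '' X) :=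
        Set.mem_image_of_mem _ (Set.mem_image_of_mem _ w.2)
      have := hr hw
      simpa [NormedSpace.dual_def, Real.norm_eq_abs, Real.dist_eq] using this
    obtain ⟨M, hM'⟩ := banach_steinhaus hb
    refine ⟨M, fun w => ?_⟩
    have h1 : ‖(NormedSpace.inclusionInDoubleDualLi ℝ (E := E)) (w : E)‖ = ‖(w : E)‖ :=
      (NormedSpace.inclusionInDoubleDualLi ℝ (E := E)).norm_map _
    rw [← h1]
    exact hM' w
  -- nonemptiness of the constraint sets
  have hS0 : ∀ (T : Finset X) (m : ℕ), ∃ w : X,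
      ∀ y ∈ T, |(‖(y : E) - (w : E)‖ - ‖(w : E)‖) - h y| < 1 / (m + 1) := by
    intro T m
    have hm : (0:ℝ) < 1 / (m + 1) := by positivity
    have hop : IsOpen {g : X → ℝ | ∀ y ∈ T, |g y - h y| < 1 / (m + 1)} := by
      have heq : {g : X → ℝ | ∀ y ∈ T, |g y - h y| < 1 / (m + 1)} =
          ⋂ y ∈ T, {g : X → ℝ | |g y - h y| < 1 / (m + 1)} := by
        ext g; simp
      rw [heq]
      refine isOpen_biInter_finset fun y _ => ?_
      exact isOpen_lt (((continuous_apply y).sub continuous_const).abs) continuous_const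
    have hhin : h ∈ {g : X → ℝ | ∀ y ∈ T, |g y - h y| < 1 / (m + 1)} := fun y _ => by
      simpa using hm
    obtain ⟨g, hg1, hg2⟩ := mem_closure_iff_nhds.1 hmem _ (hop.mem_nhds hhin)
    obtain ⟨w, rfl⟩ := hg2
    exact ⟨w, fun y hy => hg1 y hy⟩
  -- the filter of constraint sets
  set S : Finset X × ℕ → Set X := fun p =>
    {w : X | ∀ y ∈ p.1, |(‖(y : E) - (w : E)‖ - ‖(w : E)‖) - h y| < 1 / (p.2 + 1)} with hSdef
  have hmono : ∀ (p q : Finset X × ℕ), p.1 ⊆ q.1 → p.2 ≤ q.2 → S q ⊆ S p := by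
    intro p q h1 h2 w hw y hy
    refine lt_of_lt_of_le (hw y (h1 hy)) ?_
    have : (p.2 : ℝ) + 1 ≤ (q.2 : ℝ) + 1 := by exact_mod_cast Nat.succ_le_succ h2
    exact one_div_le_one_div_of_le (by positivity) this
  have hdir : Directed (· ≥ ·) fun p : Finset X × ℕ => (𝓟 (S p) : Filter X) := by
    intro p q
    refine ⟨(p.1 ∪ q.1, max p.2 q.2), ?_, ?_⟩
    · exact principal_mono.2 (hmono _ _ Finset.subset_union_left (le_max_left _ _))
    · exact principal_mono.2 (hmono _ _ Finset.subset_union_right (le_max_right _ _))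
  haveI hSne : ∀ p : Finset X × ℕ, (𝓟 (S p)).NeBot := by
    intro p
    rw [principal_neBot_iff]
    obtain ⟨w, hw⟩ := hS0 p.1 p.2
    exact ⟨w, hw⟩
  set F : Filter X := ⨅ p, 𝓟 (S p) with hFdef
  haveI hFne : F.NeBot := iInf_neBot_of_directed' hdir hSne
  have hmemF : ∀ p, S p ∈ F := fun p => (mem_iInf_of_directed hdir _).2 ⟨p, mem_principal_self _⟩
  set tw : X → WeakSpace ℝ E := fun w => toWeakSpace ℝ E (w : E) with htw
  set G : Filter (WeakSpace ℝ E) := F.map tw with hGdef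
  haveI : G.NeBot := map_neBot
  have hGle : G ≤ 𝓟 (toWeakSpace ℝ E '' X) :=
    le_principal_iff.2 (mem_map.2 (univ_mem' fun w => Set.mem_image_of_mem _ w.2))
  obtain ⟨aw, hawK, hclus⟩ := hXwc.exists_clusterPt hGle
  obtain ⟨a0, ha0X, hawa⟩ := hawK
  set a : X := ⟨a0, ha0X⟩ with ha
  refine ⟨a, fun x hxa => ?_⟩
  -- enumeration of rational coefficient lists
  obtain ⟨enumQ, henumQ⟩ := exists_surjective_nat (List ℚ)
  -- existence of each step of the recursion
  have hex : ∀ l : List X, ∃ w : X,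
      (|(‖(x : E) - (w : E)‖ - ‖(w : E)‖) - h x| < 1 / (l.length + 1) ∧
       |(‖(a : E) - (w : E)‖ - ‖(w : E)‖) - h a| < 1 / (l.length + 1)) ∧
      ∀ k < l.length,
        |nphi (comboLst a0 (l.map Subtype.val) (enumQ k)) (w : E)
          - nphi (comboLst a0 (l.map Subtype.val) (enumQ k)) a0| < 1 / (l.length + 1) := by
    intro l
    set n := l.length with hn
    set Φ : Finset (E →L[ℝ] ℝ) :=
      (Finset.range n).image fun k => nphi (comboLst a0 (l.map Subtype.val) (enumQ k)) with hΦ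
    set U : Set (WeakSpace ℝ E) :=
      ⋂ φ ∈ Φ, {u | |φ ((toWeakSpace ℝ E).symm u) - φ a0| < 1 / (n + 1)} with hU
    have hUopen : IsOpen U :=
      isOpen_biInter_finset fun φ _ =>
        isOpen_lt (((hevalcont φ).sub continuous_const).abs) continuous_const
    have hUmem : aw ∈ U := by
      refine Set.mem_iInter₂.2 fun φ _ => ?_
      have hval : φ ((toWeakSpace ℝ E).symm aw) = φ a0 := by rw [← hawa]; simp
      simp only [Set.mem_setOf_eq, hval, sub_self, abs_zero]
      positivity
    have hV : tw '' S (({x, a} : Finset X), n) ∈ G := image_mem_map (hmemF _)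
    obtain ⟨u, huU, huV⟩ := clusterPt_iff_nonempty.1 hclus (hUopen.mem_nhds hUmem) hV
    obtain ⟨w, hwS, rfl⟩ := huV
    refine ⟨w, ⟨hwS x (by simp), hwS a (by simp)⟩, ?_⟩
    intro k hk
    have hφ : nphi (comboLst a0 (l.map Subtype.val) (enumQ k)) ∈ Φ :=
      Finset.mem_image_of_mem _ (Finset.mem_range.2 hk)
    have := Set.mem_iInter₂.1 huU _ hφ
    simpa [htw] using this
  -- the recursion
  obtain ⟨v, hv⟩ := aux_dc _ hex
  set vE : ℕ → E := fun n => (v n : E) with hvE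
  -- squeeze helper
  have hsq : ∀ (g : ℕ → ℝ) (c : ℝ), (∀ᶠ n in atTop, |g n - c| ≤ 1 / (n + 1)) →
      Tendsto g atTop (𝓝 c) := by
    intro g c hg
    have h0 : Tendsto (fun n : ℕ => g n - c) atTop (𝓝 0) :=
      squeeze_zero_norm' (by simpa using hg) tendsto_one_div_add_atTop_nhds_zero_nat
    have := h0.add (tendsto_const_nhds (x := c))
    simpa using this
  -- convergence of the two distinguished coordinates
  have htx : Tendsto (fun n => ‖(x : E) - vE n‖ - ‖vE n‖) atTop (𝓝 (h x)) := by
    refine hsq _ _ (Eventually.of_forall fun n => ?_)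
    have := (hv n).1.1
    rw [List.length_ofFn] at this
    exact le_of_lt this
  have hta : Tendsto (fun n => ‖(a : E) - vE n‖ - ‖vE n‖) atTop (𝓝 (h a)) := by
    refine hsq _ _ (Eventually.of_forall fun n => ?_)
    have := (hv n).1.2
    rw [List.length_ofFn] at this
    exact le_of_lt this
  -- convergence of the norming functionals of rational combinations
  have hmap : ∀ n : ℕ, (List.ofFn fun i : Fin n => v i).map Subtype.val
      = List.ofFn fun i : Fin n => vE i := by
    intro n; rw [List.map_ofFn]; rfl
  have hT1 : ∀ q : List ℚ, Tendsto (fun n => nphi (comboF a0 vE q) (vE n)) atTop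
      (𝓝 (nphi (comboF a0 vE q) a0)) := by
    intro q
    obtain ⟨k, hk⟩ := henumQ q
    refine hsq _ _ ?_
    filter_upwards [eventually_ge_atTop (max (k + 1) q.length)] with n hn
    have h1 := (hv n).2 k (by rw [List.length_ofFn]; omega)
    rw [List.length_ofFn, hmap n, hk, comboLst_eq_comboF a0 vE n q (by omega)] at h1
    exact le_of_lt h1
  -- the span of the sequence together with a0
  set Gf : ℕ → E := fun i => if i = 0 then a0 else vE (i - 1) with hGf
  set Yb : Submodule ℝ E := (Submodule.span ℝ (Set.range Gf)).topologicalClosure with hYb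
  have hvYb : ∀ n, vE n ∈ Yb := fun n =>
    Submodule.le_topologicalClosure _ (Submodule.subset_span ⟨n + 1, by simp [hGf]⟩)
  have ha0Yb : a0 ∈ Yb :=
    Submodule.le_topologicalClosure _ (Submodule.subset_span ⟨0, by simp [hGf]⟩)
  -- weak convergence of the sequence to a0
  have hweak : ∀ φ : E →L[ℝ] ℝ, Tendsto (fun n => φ (vE n)) atTop (𝓝 (φ a0)) := by
    have huniq : ∀ c ∈ toWeakSpace ℝ E '' X, MapClusterPt c atTop (fun n => tw (v n)) → c = aw := by
      rintro c ⟨b0, hb0X, rfl⟩ hcl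
      have hclφ : ∀ φ : E →L[ℝ] ℝ, MapClusterPt (φ b0) atTop fun n => φ (vE n) := by
        intro φ
        have hcont : ContinuousAt (fun u : WeakSpace ℝ E => φ ((toWeakSpace ℝ E).symm u))
            (toWeakSpace ℝ E b0) := (hevalcont φ).continuousAt
        have := hcl.continuousAt_comp hcont
        simpa [Function.comp_def, htw, hvE] using this
      have hA1 : ∀ q : List ℚ, nphi (comboF a0 vE q) b0 = nphi (comboF a0 vE q) a0 :=
        fun q => aux_cluster_eq (hclφ _) (hT1 q)
      have hA2 : b0 ∈ Yb := by
        by_contra hb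
        have hYbcl : IsClosed (Yb : Set E) := by
          rw [hYb]; exact Submodule.isClosed_topologicalClosure _
        obtain ⟨f, u0, hfu, hub⟩ := geometric_hahn_banach_closed_point Yb.convex hYbcl hb
        have hu0pos : 0 < u0 := by simpa using hfu 0 Yb.zero_mem
        have hf0 : ∀ n, f (vE n) = 0 := by
          intro n
          by_contra hfn
          have h2 := hfu _ (Yb.smul_mem ((|u0| + 1) / f (vE n)) (hvYb n))
          rw [map_smul, smul_eq_mul, div_mul_cancel₀ _ hfn] at h2
          have := le_abs_self u0
          linarith
        have hfb : f b0 = 0 := by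
          refine aux_cluster_eq (hclφ f) ?_
          have hfun : (fun n => f (vE n)) = fun _ => (0:ℝ) := funext hf0
          rw [hfun]
          exact tendsto_const_nhds
        rw [hfb] at hub
        linarith
      suffices hba : b0 = a0 by rw [hba]; exact hawa
      by_contra hne
      have hz : b0 - a0 ∈ Yb := Submodule.sub_mem _ hA2 ha0Yb
      have hz0 : b0 - a0 ≠ 0 := sub_ne_zero.2 hne
      have hnz : 0 < ‖b0 - a0‖ := norm_pos_iff.2 hz0
      set δ : ℝ := ‖b0 - a0‖ / 5 with hδ
      have hδpos : 0 < δ := by positivity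
      have hzc : b0 - a0 ∈ closure ((Submodule.span ℝ (Set.range Gf) : Submodule ℝ E) : Set E) := by
        rw [← Submodule.topologicalClosure_coe]
        exact hz
      obtain ⟨y, hy, hyd⟩ := Metric.mem_closure_iff.1 hzc δ hδpos
      obtain ⟨t, htsub, hyt⟩ := Submodule.mem_span_finite_of_mem_span hy
      have hidx : ∀ e ∈ t, ∃ i : ℕ, Gf i = e := fun e he => htsub he
      choose idx hidxe using hidx
      set m : ℕ := (t.attach.sup fun e => idx e.1 e.2) + 1 with hm
      have hym : y ∈ Submodule.span ℝ (Set.range fun i : Fin m => Gf i) := by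
        refine Submodule.span_mono ?_ hyt
        intro e he
        refine ⟨⟨idx e he, ?_⟩, hidxe e he⟩
        have : idx e he ≤ t.attach.sup fun e => idx e.1 e.2 :=
          Finset.le_sup (f := fun e : {z // z ∈ t} => idx e.1 e.2) (Finset.mem_attach t ⟨e, he⟩)
        omega
      obtain ⟨c, hc⟩ := (Submodule.mem_span_range_iff_exists_fun ℝ).1 hym
      obtain ⟨qr, hqr⟩ := aux_rat_approx m (fun i : Fin m => Gf i) c hδpos
      set y' : E := comboF a0 vE (List.ofFn qr) with hy'
      have hy'eq : y' = ∑ i : Fin m, (qr i : ℝ) • Gf i := by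
        rw [hy', comboF]
        rw [List.length_ofFn]
        rw [← Fin.sum_univ_eq_sum_range (fun i => ((List.ofFn qr).getD i 0 : ℝ) • Gf i) m]
        refine Finset.sum_congr rfl fun i _ => ?_
        congr 1
        rw [List.getD_eq_getElem _ 0 (n := (i : ℕ)) (by rw [List.length_ofFn]; exact i.isLt), List.getElem_ofFn]
      have hyy' : ‖y - y'‖ < δ := by
        rw [hc] at hqr
        rw [hy'eq]
        exact hqr
      have hzy : ‖(b0 - a0) - y‖ < δ := by rwa [← dist_eq_norm]
      have hzy' : ‖(b0 - a0) - y'‖ < 2 * δ := by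
        have heq : (b0 - a0) - y' = ((b0 - a0) - y) + (y - y') := by abel
        rw [heq]
        calc ‖((b0 - a0) - y) + (y - y')‖ ≤ ‖(b0 - a0) - y‖ + ‖y - y'‖ := norm_add_le _ _
        _ < 2 * δ := by linarith
      have hy'big : 3 * δ ≤ ‖y'‖ := by
        have h1 : ‖b0 - a0‖ - ‖y'‖ ≤ ‖(b0 - a0) - y'‖ := norm_sub_norm_le _ _
        have h2 : ‖b0 - a0‖ = 5 * δ := by rw [hδ]; ring
        linarith
      have hφz : nphi y' (b0 - a0) = 0 := by
        have h1 := hA1 (List.ofFn qr)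
        rw [map_sub]
        rw [← hy'] at h1
        rw [h1, sub_self]
      have hcontr : ‖y'‖ ≤ 2 * δ := by
        have h1 : nphi y' y' = ‖y'‖ := nphi_apply_self y'
        have h3 : nphi y' y' = nphi y' (y' - (b0 - a0)) := by rw [map_sub, hφz, sub_zero]
        have h4 : |nphi y' (y' - (b0 - a0))| ≤ ‖y' - (b0 - a0)‖ := by
          calc |nphi y' (y' - (b0 - a0))| ≤ ‖nphi y'‖ * ‖y' - (b0 - a0)‖ :=
                (nphi y').le_opNorm _
          _ ≤ 1 * ‖y' - (b0 - a0)‖ := by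
                have := nphi_norm y'
                gcongr
          _ = ‖y' - (b0 - a0)‖ := one_mul _
        calc ‖y'‖ = |nphi y' y'| := by rw [h1]; exact (abs_of_nonneg (norm_nonneg _)).symm
        _ = |nphi y' (y' - (b0 - a0))| := by rw [h3]
        _ ≤ ‖y' - (b0 - a0)‖ := h4
        _ = ‖(b0 - a0) - y'‖ := norm_sub_rev _ _
        _ ≤ 2 * δ := le_of_lt hzy'
      linarith
    have hu : Tendsto (fun n => tw (v n)) atTop (𝓝 aw) :=
      aux_tendsto_of_cluster_unique hXwc (fun n => ⟨vE n, (v n).2, rfl⟩) huniq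
    intro φ
    have hφaw : φ ((toWeakSpace ℝ E).symm aw) = φ a0 := by rw [← hawa]; simp
    have := ((hevalcont φ).continuousAt (x := aw)).tendsto.comp hu
    rw [hφaw] at this
    simpa [Function.comp_def, htw, hvE] using this
  -- extraction of subsequences with convergent norms
  have hbd1 : ∀ n, ‖(a : E) - vE n‖ ∈ Set.Icc (0:ℝ) (‖(a : E)‖ + M) := fun n =>
    ⟨norm_nonneg _, (norm_sub_le _ _).trans (by have := hM (v n); simp only [ha]; linarith)⟩
  obtain ⟨α, -, φ1, hφ1, hαt⟩ := tendsto_subseq_of_bounded (Metric.isBounded_Icc _ _) hbd1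
  have hbd2 : ∀ n, ‖(x : E) - vE (φ1 n)‖ ∈ Set.Icc (0:ℝ) (‖(x : E)‖ + M) := fun n =>
    ⟨norm_nonneg _, (norm_sub_le _ _).trans (by have := hM (v (φ1 n)); linarith)⟩
  obtain ⟨ξ, -, φ2, hφ2, hξt⟩ := tendsto_subseq_of_bounded (Metric.isBounded_Icc _ _) hbd2
  set ψ : ℕ → ℕ := φ1 ∘ φ2 with hψ
  have hψmono : StrictMono ψ := hφ1.comp hφ2
  have hαψ : Tendsto (fun j => ‖(a : E) - vE (ψ j)‖) atTop (𝓝 α) := by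
    have := hαt.comp hφ2.tendsto_atTop
    simpa [Function.comp_def, hψ] using this
  have hξψ : Tendsto (fun j => ‖(x : E) - vE (ψ j)‖) atTop (𝓝 ξ) := by
    simpa [Function.comp_def, hψ] using hξt
  have hweakψ : ∀ f : E →L[ℝ] ℝ, Tendsto (fun j => f (vE (ψ j))) atTop (𝓝 (f a0)) :=
    fun f => (hweak f).comp hψmono.tendsto_atTop
  have hxa0 : (x : E) ≠ a0 := fun hEq => hxa (Subtype.ext hEq)
  have hop := opial (fun j => vE (ψ j)) a0 hweakψ (x : E) hxa0
  have hL1 : liminf (fun j => ‖vE (ψ j) - a0‖) atTop = α := by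
    have : Tendsto (fun j => ‖vE (ψ j) - a0‖) atTop (𝓝 α) := by
      simpa [norm_sub_rev, ha] using hαψ
    exact this.liminf_eq
  have hL2 : liminf (fun j => ‖vE (ψ j) - (x : E)‖) atTop = ξ := by
    have : Tendsto (fun j => ‖vE (ψ j) - (x : E)‖) atTop (𝓝 ξ) := by
      simpa [norm_sub_rev] using hξψ
    exact this.liminf_eq
  rw [hL1, hL2] at hop
  -- conclude
  have htd : Tendsto (fun n => ‖(x : E) - vE n‖ - ‖(a : E) - vE n‖) atTop (𝓝 (h x - h a)) := by
    have := htx.sub hta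
    have heq : (fun n => (‖(x : E) - vE n‖ - ‖vE n‖) - (‖(a : E) - vE n‖ - ‖vE n‖))
        = fun n => ‖(x : E) - vE n‖ - ‖(a : E) - vE n‖ := by
      funext n; ring
    rwa [heq] at this
  have htdψ : Tendsto (fun j => ‖(x : E) - vE (ψ j)‖ - ‖(a : E) - vE (ψ j)‖) atTop
      (𝓝 (h x - h a)) := by
    have := htd.comp hψmono.tendsto_atTop
    simpa [Function.comp_def] using this
  have htdψ' : Tendsto (fun j => ‖(x : E) - vE (ψ j)‖ - ‖(a : E) - vE (ψ j)‖) atTop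
      (𝓝 (ξ - α)) := hξψ.sub hαψ
  have hfin : h x - h a = ξ - α := tendsto_nhds_unique htdψ htdψ'
  linarith
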